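/- Let f be a monic polynomial of degree d ≥ 2 whose filled Julia set K(f) is connected, and let φ be its Böttcher coordinate. Let t ∈ ℝ and suppose the external ray R_f(t) lands at a point z₀ ∈ K(f) which is not a critical value of f, so that f⁻¹(z₀) consists of d distinct points. Then each point of f⁻¹(z₀) is the landing point of precisely one of the external rays R_f((t + k)/d) for k ∈ {0, 1, …, d−1}. -/

import Mathlib

open Complex Metric Set Filter Polynomial

noncomputable section

/-- `x` is a computable real number. -/
def ComputableReal (x : ℝ) : Prop :=
  ∃ g : ℕ → ℚ, Computable g ∧ ∀ n : ℕ, |(g n : ℝ) - x| < (1 / 2) ^ n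

/-- `z` is a computable complex number. -/
def ComputableComplex (z : ℂ) : Prop :=
  ComputableReal z.re ∧ ComputableReal z.im

/-- The point of `ℂ` with rational coordinates `q`. -/
def ratPoint (q : ℚ × ℚ) : ℂ := ⟨(q.1 : ℝ), (q.2 : ℝ)⟩

/-- The rational ball coded by the triple `c` (center coordinates, radius). -/
def ratBall (c : ℚ × ℚ × ℚ) : Set ℂ := Metric.ball (ratPoint (c.1, c.2.1)) (c.2.2 : ℝ)

/-- A computable enumeration of (codes of) rational balls. -/
def ballEnum (n : ℕ) : ℚ × ℚ × ℚ := Denumerable.ofNat (ℚ × ℚ × ℚ) n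

/-- `U` is a lower computable (recursively enumerable) open subset of `ℂ`:
it is a union of a computable sequence of rational balls. -/
def LowerComputableOpen (U : Set ℂ) : Prop :=
  ∃ g : ℕ → ℚ × ℚ × ℚ, Computable g ∧ U = ⋃ n, ratBall (g n)

/-- `K` is a computable (compact) subset of `ℂ`: there is a computable assignment of a
finite list of rational points to each `n`, within Hausdorff distance `2⁻ⁿ` of `K`. -/
def ComputableCompactSet (K : Set ℂ) : Prop :=
  ∃ C : ℕ → List (ℚ × ℚ), Computable C ∧
    ∀ n : ℕ, (C n = [] ↔ K = ∅) ∧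
      Metric.hausdorffDist (ratPoint '' {q | q ∈ C n}) K < (1 / 2) ^ n

/-- `x` is a uniformly computable sequence of complex numbers. -/
def UniformlyComputableSeq (x : ℕ → ℂ) : Prop :=
  ∃ h : ℕ × ℕ → ℚ × ℚ, Computable h ∧
    ∀ n m : ℕ, dist (ratPoint (h (n, m))) (x n) ≤ (1 / 2) ^ m

/-- A compact set `K` is lower computable if some uniformly computable sequence of
points of `K` is dense in `K`. -/
def LowerComputableCompact (K : Set ℂ) : Prop :=
  ∃ x : ℕ → ℂ, (∀ n, x n ∈ K) ∧ UniformlyComputableSeq x ∧ K ⊆ closure (Set.range x)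

/-- `f` is computable on `S`: preimages of rational balls are, relative to `S`,
uniformly lower computable open sets. -/
def ComputableOn (f : ℂ → ℂ) (S : Set ℂ) : Prop :=
  ∃ e : ℕ × ℕ → ℚ × ℚ × ℚ, Computable e ∧
    ∀ n : ℕ, f ⁻¹' ratBall (ballEnum n) ∩ S = (⋃ k, ratBall (e (n, k))) ∩ S

/-- The filled Julia set of `f`: points with bounded forward orbit. -/
def filledJulia (f : ℂ → ℂ) : Set ℂ :=
  {z : ℂ | Bornology.IsBounded (Set.range fun n : ℕ => f^[n] z)}

/-- The Julia set of `f`: the boundary of the filled Julia set. -/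
def juliaSet (f : ℂ → ℂ) : Set ℂ := frontier (filledJulia f)

/-- The external ray of angle `t` (traced by `r ↦ φ (r e^{2πit})`, `r > 1`) lands at `w`. -/
def Lands (φ : ℂ → ℂ) (t : ℝ) (w : ℂ) : Prop :=
  Filter.Tendsto (fun r : ℝ => φ ((r : ℂ) * Complex.exp (2 * Real.pi * Complex.I * (t : ℂ))))
    (nhdsWithin 1 (Set.Ioi 1)) (nhds w)

open Bornology

lemma sep_of_finite {P : Set ℂ} (hP : P.Finite) :
    ∃ ε > (0:ℝ), ∀ w ∈ P, ∀ w' ∈ P, w ≠ w' → 3 * ε ≤ dist w w' := by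
  obtain ⟨C, hC0, hC⟩ := Set.einfsep_pos.1 hP.einfsep_pos
  have hC'0 : (0:ENNReal) < min C 1 := lt_min hC0 zero_lt_one
  have hC'top : min C 1 ≠ ⊤ := by
    intro h
    exact absurd ((min_le_right C 1).trans_eq' h) (by simp)
  have htr : 0 < (min C 1).toReal := ENNReal.toReal_pos hC'0.ne' hC'top
  refine ⟨(min C 1).toReal / 3, by linarith, fun w hw w' hw' hne => ?_⟩
  have h1 : min C 1 ≤ edist w w' := le_trans (min_le_left _ _) (hC w hw w' hw' hne)
  have h2 : (min C 1).toReal ≤ dist w w' := by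
    rw [dist_edist]
    exact (ENNReal.toReal_le_toReal hC'top (edist_ne_top w w')).2 h1
  linarith

lemma curve_lands {z₀ : ℂ} {P : Set ℂ} (hPfin : P.Finite) {g : ℂ → ℂ}
    (hgc : Continuous g) (hPdef : P = g ⁻¹' {z₀})
    (hbd : ∀ S : Set ℂ, IsBounded S → IsBounded (g ⁻¹' S))
    {δ : ℝ → ℂ} (hδc : ContinuousOn δ (Set.Ioi 1))
    (htend : Tendsto (fun r => g (δ r)) (nhdsWithin 1 (Set.Ioi 1)) (nhds z₀)) :
    ∃ w ∈ P, Tendsto δ (nhdsWithin 1 (Set.Ioi 1)) (nhds w) := by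
  set F := nhdsWithin (1:ℝ) (Set.Ioi 1) with hF
  obtain ⟨A, hA⟩ : ∃ A : ℝ, ∀ᶠ r in F, δ r ∈ closedBall 0 A := by
    have h1 : ∀ᶠ r in F, g (δ r) ∈ closedBall z₀ 1 :=
      htend (closedBall_mem_nhds z₀ one_pos)
    obtain ⟨A, hA⟩ := (hbd _ (isBounded_closedBall (x := z₀) (r := 1))).subset_closedBall 0
    exact ⟨A, h1.mono fun r hr => hA hr⟩
  have hnbhd : ∀ N : Set ℂ, IsOpen N → P ⊆ N → ∀ᶠ r in F, δ r ∈ N := by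
    intro N hNopen hPN
    by_contra hcon
    have hfreq : ∃ᶠ r in F, δ r ∉ N := Filter.not_eventually.1 hcon
    have hG : (F ⊓ 𝓟 {r | δ r ∉ N}).NeBot := by
      rwa [← frequently_iff_neBot]
    set G := F ⊓ 𝓟 {r | δ r ∉ N} with hGdef
    have hK : IsCompact (closedBall (0:ℂ) A ∩ Nᶜ) :=
      (isCompact_closedBall 0 A).inter_right hNopen.isClosed_compl
    have hmem : closedBall (0:ℂ) A ∩ Nᶜ ∈ Filter.map δ G := by
      rw [Filter.mem_map]
      have h1 : {r | δ r ∈ closedBall 0 A} ∈ G := Filter.mem_inf_of_left hA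
      have h2 : {r | δ r ∉ N} ∈ G := Filter.mem_inf_of_right (mem_principal_self _)
      filter_upwards [h1, h2] with r hr1 hr2
      exact ⟨hr1, hr2⟩
    obtain ⟨p, hpK, hp⟩ := hK.exists_clusterPt (le_principal_iff.2 hmem)
    have hgp : g p = z₀ := by
      have h1 : Filter.map g (nhds p ⊓ Filter.map δ G) ≤ nhds (g p) ⊓ nhds z₀ := by
        refine le_inf ?_ ?_
        · exact (Filter.map_mono inf_le_left).trans hgc.continuousAt
        · refine (Filter.map_mono inf_le_right).trans ?_
          rw [Filter.map_map]
          exact le_trans (Filter.map_mono inf_le_left) htend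
      have hp' : (nhds p ⊓ Filter.map δ G).NeBot := hp
      have hne : (Filter.map g (nhds p ⊓ Filter.map δ G)).NeBot := hp'.map g
      exact eq_of_nhds_neBot (hne.mono h1)
    have : p ∈ P := by rw [hPdef]; exact hgp
    exact hpK.2 (hPN this)
  obtain ⟨ε₀, hε₀, hsep⟩ := sep_of_finite hPfin
  have hball : ∀ ε : ℝ, 0 < ε → ε ≤ ε₀ → ∃ w ∈ P, ∀ᶠ r in F, δ r ∈ ball w ε := by
    intro ε hε hεε₀
    have hNopen : IsOpen (⋃ w ∈ P, ball w ε) := isOpen_biUnion fun w _ => isOpen_ball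
    have hPN : P ⊆ ⋃ w ∈ P, ball w ε := fun w hw =>
      Set.mem_biUnion hw (mem_ball_self hε)
    have hev := hnbhd _ hNopen hPN
    rw [hF, eventually_iff, mem_nhdsGT_iff_exists_Ioo_subset] at hev
    obtain ⟨u, hu, hIoo⟩ := hev
    obtain ⟨r₀, hr₀⟩ := exists_between (show (1:ℝ) < u from hu)
    have hδr₀ : δ r₀ ∈ ⋃ w ∈ P, ball w ε := hIoo ⟨hr₀.1, hr₀.2⟩
    obtain ⟨w, hwP, hw⟩ := Set.mem_iUnion₂.1 hδr₀
    refine ⟨w, hwP, ?_⟩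
    have hT : δ '' Set.Ioo 1 u ⊆ ball w ε := by
      have hpre : IsPreconnected (δ '' Set.Ioo 1 u) :=
        isPreconnected_Ioo.image δ (hδc.mono fun x hx => hx.1)
      have hU : IsOpen (ball w ε) := isOpen_ball
      have hV : IsOpen (⋃ w' ∈ P \ {w}, ball w' ε) :=
        isOpen_biUnion fun _ _ => isOpen_ball
      have hdisj : Disjoint (ball w ε) (⋃ w' ∈ P \ {w}, ball w' ε) := by
        rw [Set.disjoint_left]
        intro x hx hx'
        obtain ⟨w', hw'mem, hxw'⟩ := Set.mem_iUnion₂.1 hx'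
        have h3 : 3 * ε₀ ≤ dist w w' := hsep w hwP w' hw'mem.1 (Ne.symm hw'mem.2)
        have : dist w w' ≤ dist x w + dist x w' := dist_triangle_left w w' x
        rw [mem_ball] at hx hxw'
        linarith
      have hsub : δ '' Set.Ioo 1 u ⊆ ball w ε ∪ ⋃ w' ∈ P \ {w}, ball w' ε := by
        rintro x ⟨r, hr, rfl⟩
        have := hIoo hr
        obtain ⟨w'', hw''P, hxw''⟩ := Set.mem_iUnion₂.1 this
        by_cases h : w'' = w
        · exact Or.inl (h ▸ hxw'')
        · exact Or.inr (Set.mem_biUnion ⟨hw''P, h⟩ hxw'')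
      have hne : (δ '' Set.Ioo 1 u ∩ ball w ε).Nonempty :=
        ⟨δ r₀, ⟨r₀, ⟨hr₀.1, hr₀.2⟩, rfl⟩, hw⟩
      exact hpre.subset_left_of_subset_union hU hV hdisj hsub hne
    rw [hF, eventually_iff]
    exact mem_of_superset (Ioo_mem_nhdsGT_of_mem ⟨le_refl 1, hu⟩)
      fun r hr => hT ⟨r, hr, rfl⟩
  obtain ⟨w, hwP, hw⟩ := hball ε₀ hε₀ le_rfl
  refine ⟨w, hwP, ?_⟩
  rw [Metric.tendsto_nhds]
  intro η hη
  obtain ⟨w', hw'P, hw'⟩ := hball (min η ε₀) (lt_min hη hε₀) (min_le_right _ _)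
  have hww' : w' = w := by
    by_contra hne
    have h3 : 3 * ε₀ ≤ dist w' w := hsep w' hw'P w hwP hne
    obtain ⟨r, hr1, hr2⟩ := (hw.and hw').exists
    have : dist w' w ≤ dist (δ r) w' + dist (δ r) w := dist_triangle_left w' w (δ r)
    rw [mem_ball] at hr1 hr2
    have hmin : dist (δ r) w' < ε₀ := lt_of_lt_of_le hr2 (min_le_right _ _)
    linarith
  subst hww'
  filter_upwards [hw'] with r hr
  exact lt_of_lt_of_le hr (min_le_left _ _)

lemma preimage_root_facts {f : Polynomial ℂ} (hmonic : f.Monic) {d : ℕ}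
    (hd : d = f.natDegree) (hd2 : 2 ≤ d) {z₀ : ℂ}
    (hnotcv : ∀ z : ℂ, (Polynomial.derivative f).eval z = 0 → f.eval z ≠ z₀) :
    ((fun z : ℂ => f.eval z) ⁻¹' {z₀}).Finite ∧
      ((fun z : ℂ => f.eval z) ⁻¹' {z₀}).ncard = d := by
  classical
  set g := f - C z₀ with hgdef
  have hgdeg : g.natDegree = d := by rw [hgdef, natDegree_sub_C, ← hd]
  have hg0 : g ≠ 0 := by
    intro h
    rw [h, natDegree_zero] at hgdeg
    omega
  have hiff : ∀ w : ℂ, f.eval w = z₀ ↔ g.IsRoot w := by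
    intro w
    rw [hgdef, IsRoot.def, eval_sub, eval_C, sub_eq_zero]
  have hnodup : g.roots.Nodup := by
    rw [Multiset.nodup_iff_count_le_one]
    intro w
    rw [count_roots]
    by_contra hcon
    have hroot : g.IsRoot w := (rootMultiplicity_pos hg0).1 (by omega)
    have hder : (Polynomial.derivative g).rootMultiplicity w = rootMultiplicity w g - 1 :=
      derivative_rootMultiplicity_of_root hroot
    have hderf : Polynomial.derivative g = Polynomial.derivative f := by
      rw [hgdef, derivative_sub, derivative_C, sub_zero]
    have hderf0 : Polynomial.derivative f ≠ 0 := by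
      intro h
      have := natDegree_eq_zero_of_derivative_eq_zero h
      omega
    have hrootder : (Polynomial.derivative f).IsRoot w := by
      have : 0 < (Polynomial.derivative g).rootMultiplicity w := by omega
      rw [hderf] at this
      exact (rootMultiplicity_pos hderf0).1 this
    exact hnotcv w hrootder ((hiff w).2 hroot)
  have hcard : Multiset.card g.roots = d := by
    rw [splits_iff_card_roots.1 (IsAlgClosed.splits g), hgdeg]
  have hset : (fun z : ℂ => f.eval z) ⁻¹' {z₀} = ↑g.roots.toFinset := by
    ext w
    simp only [Set.mem_preimage, Set.mem_singleton_iff, Finset.coe_sort_coe,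
      Finset.mem_coe, Multiset.mem_toFinset, mem_roots hg0]
    exact hiff w
  constructor
  · rw [hset]; exact (g.roots.toFinset : Finset ℂ).finite_toSet
  · rw [hset, Set.ncard_coe_finset, Multiset.toFinset_card_of_nodup hnodup, hcard]

lemma poly_preimage_bounded {f : Polynomial ℂ} (hdeg : 0 < f.degree) :
    ∀ S : Set ℂ, IsBounded S → IsBounded ((fun z : ℂ => f.eval z) ⁻¹' S) := by
  intro S hS
  obtain ⟨M, hM⟩ := isBounded_iff_forall_norm_le.1 hS
  have htd : Tendsto (fun z : ℂ => ‖f.eval z‖) (Bornology.cobounded ℂ) atTop :=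
    f.tendsto_norm_atTop hdeg tendsto_norm_cobounded_atTop
  have hev : ∀ᶠ z in Bornology.cobounded ℂ, M < ‖f.eval z‖ := htd.eventually_gt_atTop M
  rw [Bornology.isBounded_def]
  refine Filter.mem_of_superset hev fun z hz => ?_
  intro hmem
  exact absurd (hM _ hmem) (not_le.2 hz)

/-- Let `f` be a monic polynomial of degree `d ≥ 2` with connected filled
Julia set and Böttcher coordinate `φ`.  If the external ray `R_f(t)` lands at a point
`z₀ ∈ K(f)` which is not a critical value of `f`, then `f⁻¹(z₀)` consists of `d` distinct
points and each of them is the landing point of precisely one of the external rays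
`R_f((t + k)/d)`, `k ∈ {0, 1, …, d−1}`. -/
theorem landing_of_preimage_rays (f : Polynomial ℂ) (hmonic : f.Monic)
    (d : ℕ) (hd : d = f.natDegree) (hd2 : 2 ≤ d)
    (hconn : IsConnected (filledJulia (fun z : ℂ => f.eval z)))
    (φ : ℂ → ℂ)
    (hbij : Set.BijOn φ {z : ℂ | 1 < ‖z‖} (filledJulia (fun z : ℂ => f.eval z))ᶜ)
    (hholo : DifferentiableOn ℂ φ {z : ℂ | 1 < ‖z‖})
    (hnorm : Filter.Tendsto (fun z : ℂ => φ z / z) (Bornology.cobounded ℂ) (nhds 1))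
    (hconj : ∀ z : ℂ, 1 < ‖z‖ → φ (z ^ d) = f.eval (φ z))
    (t : ℝ) (z₀ : ℂ) (hz₀ : z₀ ∈ filledJulia (fun z : ℂ => f.eval z))
    (hnotcv : ∀ z : ℂ, (Polynomial.derivative f).eval z = 0 → f.eval z ≠ z₀)
    (hland : Lands φ t z₀) :
    ((fun z : ℂ => f.eval z) ⁻¹' {z₀}).ncard = d ∧
    ∀ w : ℂ, f.eval w = z₀ → ∃! k : Fin d, Lands φ ((t + (k : ℕ)) / d) w := by
  classical
  set F := nhdsWithin (1:ℝ) (Set.Ioi 1) with hFdef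
  set P := (fun z : ℂ => f.eval z) ⁻¹' {z₀} with hPdef
  obtain ⟨hPfin, hPcard⟩ := preimage_root_facts hmonic hd hd2 hnotcv
  have hdn0 : d ≠ 0 := by omega
  have hdC : (d:ℂ) ≠ 0 := Nat.cast_ne_zero.2 hdn0
  have hdRpos : (0:ℝ) < d := by positivity
  have hf0 : f ≠ 0 := hmonic.ne_zero
  have hdegpos : 0 < f.degree := by
    rw [← natDegree_pos_iff_degree_pos, ← hd]; omega
  -- abbreviations
  have habs : ∀ (k : ℕ) (r : ℝ), 1 < r →
      (r:ℂ) * Complex.exp (2 * Real.pi * Complex.I * (((t + k)/d : ℝ):ℂ)) ∈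
        {z : ℂ | 1 < ‖z‖} := by
    intro k r hr
    simp only [Set.mem_setOf_eq, norm_mul, Complex.norm_real, Real.norm_eq_abs, Complex.norm_exp]
    have hre : (2 * (Real.pi:ℂ) * Complex.I * (((t + k)/d : ℝ):ℂ)).re = 0 := by
      simp [Complex.mul_re, Complex.mul_im]
    rw [hre, Real.exp_zero, mul_one, abs_of_pos (by linarith)]
    exact hr
  have hpow : ∀ (k : ℕ) (r : ℝ),
      ((r:ℂ) * Complex.exp (2 * Real.pi * Complex.I * (((t + k)/d : ℝ):ℂ)))^d =
        ((r^d : ℝ):ℂ) * Complex.exp (2 * Real.pi * Complex.I * ((t : ℝ):ℂ)) := by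
    intro k r
    rw [mul_pow]
    have h1 : (Complex.exp (2 * Real.pi * Complex.I * (((t + k)/d : ℝ):ℂ)))^d =
        Complex.exp ((d:ℂ) * (2 * Real.pi * Complex.I * (((t + k)/d : ℝ):ℂ))) :=
      (Complex.exp_nat_mul _ d).symm
    have h2 : (d:ℂ) * (2 * Real.pi * Complex.I * (((t + k)/d : ℝ):ℂ)) =
        2 * Real.pi * Complex.I * ((t : ℝ):ℂ) + (k:ℂ) * (2 * Real.pi * Complex.I) := by
      push_cast
      field_simp
    rw [h1, h2, Complex.exp_add, Complex.exp_nat_mul_two_pi_mul_I, mul_one]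
    push_cast
    ring
  have hfe : ∀ (k : ℕ) (r : ℝ), 1 < r →
      f.eval (φ ((r:ℂ) * Complex.exp (2 * Real.pi * Complex.I * (((t + k)/d : ℝ):ℂ)))) =
        φ (((r^d : ℝ):ℂ) * Complex.exp (2 * Real.pi * Complex.I * ((t : ℝ):ℂ))) := by
    intro k r hr
    rw [← hconj _ (habs k r hr), hpow k r]
  have hq : Tendsto (fun r : ℝ => r^d) F F := by
    have h1 : ContinuousWithinAt (fun r : ℝ => r^d) (Set.Ioi 1) 1 :=
      (continuous_pow d).continuousWithinAt
    have h2 : Set.MapsTo (fun r : ℝ => r^d) (Set.Ioi 1) (Set.Ioi 1) := by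
      intro r hr
      exact one_lt_pow₀ (show (1:ℝ) < r from hr) hdn0
    have := h1.tendsto_nhdsWithin h2
    rwa [one_pow] at this
  have key : ∀ k : ℕ, ∃ w ∈ P,
      Tendsto (fun r : ℝ =>
        φ ((r:ℂ) * Complex.exp (2 * Real.pi * Complex.I * (((t + k)/d : ℝ):ℂ)))) F (nhds w) := by
    intro k
    have hδc : ContinuousOn (fun r : ℝ =>
        φ ((r:ℂ) * Complex.exp (2 * Real.pi * Complex.I * (((t + k)/d : ℝ):ℂ)))) (Set.Ioi 1) := by
      apply ContinuousOn.comp hholo.continuousOn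
      · exact (Complex.continuous_ofReal.mul continuous_const).continuousOn
      · intro r hr
        exact habs k r hr
    have htend : Tendsto (fun r : ℝ => f.eval
        (φ ((r:ℂ) * Complex.exp (2 * Real.pi * Complex.I * (((t + k)/d : ℝ):ℂ))))) F (nhds z₀) := by
      have hcomp := hland.comp hq
      refine hcomp.congr' ?_
      filter_upwards [self_mem_nhdsWithin] with r hr
      exact (hfe k r hr).symm
    exact curve_lands hPfin f.continuous hPdef (poly_preimage_bounded hdegpos) hδc htend
  choose L hLP hLt using key
  -- local injectivity of f near points of P
  have hlocinj : ∀ w ∈ P, ∃ U ∈ nhds w, Set.InjOn (fun z : ℂ => f.eval z) U := by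
    intro w hw
    have hfw : f.eval w = z₀ := hw
    have hder : (Polynomial.derivative f).eval w ≠ 0 := fun h => hnotcv w h hfw
    have hstrict : HasStrictDerivAt (fun z : ℂ => f.eval z)
        ((Polynomial.derivative f).eval w) w := f.hasStrictDerivAt w
    have hev := (hstrict.hasStrictFDerivAt_equiv hder).eventually_left_inverse
    refine ⟨_, hev, fun x hx y hy hxy => ?_⟩
    simp only [Set.mem_setOf_eq] at hx hy
    have hxy' : f.eval x = f.eval y := hxy
    rw [← hx, ← hy, hxy']
  -- injectivity of landing points
  have hinj : ∀ k k' : ℕ, k < d → k' < d → L k = L k' → k = k' := by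
    intro k k' hk hk' heq
    obtain ⟨U, hU, hUinj⟩ := hlocinj (L k) (hLP k)
    have h1 : ∀ᶠ r in F, (fun r : ℝ =>
        φ ((r:ℂ) * Complex.exp (2 * Real.pi * Complex.I * (((t + k)/d : ℝ):ℂ)))) r ∈ U :=
      hLt k hU
    have h2 : ∀ᶠ r in F, (fun r : ℝ =>
        φ ((r:ℂ) * Complex.exp (2 * Real.pi * Complex.I * (((t + k')/d : ℝ):ℂ)))) r ∈ U := by
      have h := hLt k'
      rw [← heq] at h
      exact h hU
    have h3 : ∀ᶠ r in F, r ∈ Set.Ioi (1:ℝ) := self_mem_nhdsWithin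
    obtain ⟨r, hr1, hr2, hr3⟩ := (h1.and (h2.and h3)).exists
    have hrIoi : (1:ℝ) < r := hr3
    have hfeq : f.eval (φ ((r:ℂ) * Complex.exp (2 * Real.pi * Complex.I * (((t + k)/d : ℝ):ℂ)))) =
        f.eval (φ ((r:ℂ) * Complex.exp (2 * Real.pi * Complex.I * (((t + k')/d : ℝ):ℂ)))) := by
      rw [hfe k r hrIoi, hfe k' r hrIoi]
    have hφeq : φ ((r:ℂ) * Complex.exp (2 * Real.pi * Complex.I * (((t + k)/d : ℝ):ℂ))) =
        φ ((r:ℂ) * Complex.exp (2 * Real.pi * Complex.I * (((t + k')/d : ℝ):ℂ))) :=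
      hUinj hr1 hr2 hfeq
    have hargeq : (r:ℂ) * Complex.exp (2 * Real.pi * Complex.I * (((t + k)/d : ℝ):ℂ)) =
        (r:ℂ) * Complex.exp (2 * Real.pi * Complex.I * (((t + k')/d : ℝ):ℂ)) :=
      hbij.injOn (habs k r hrIoi) (habs k' r hrIoi) hφeq
    have hrC : (r:ℂ) ≠ 0 := by
      simp only [ne_eq, Complex.ofReal_eq_zero]
      linarith
    have hexpeq := mul_left_cancel₀ hrC hargeq
    obtain ⟨n, hn⟩ := Complex.exp_eq_exp_iff_exists_int.1 hexpeq
    have h2πI : (2 * (Real.pi:ℂ) * Complex.I) ≠ 0 := by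
      simp [Real.pi_ne_zero, Complex.I_ne_zero]
    have hfac : (2 * (Real.pi:ℂ) * Complex.I) *
        ((((t + k)/d : ℝ):ℂ) - (((t + k')/d : ℝ):ℂ) - (n:ℂ)) = 0 := by
      linear_combination hn
    have hsub : (((t + k)/d : ℝ):ℂ) = (((t + k')/d : ℝ):ℂ) + (n:ℂ) := by
      rcases mul_eq_zero.1 hfac with h | h
      · exact absurd h h2πI
      · linear_combination h
    have hreal : ((t + k)/d : ℝ) = ((t + k')/d : ℝ) + n := by
      exact_mod_cast hsub
    have hkk' : (k:ℝ) = (k':ℝ) + n * d := by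
      field_simp at hreal
      linarith
    have hintEq : (k:ℤ) = (k':ℤ) + n * d := by exact_mod_cast hkk'
    have hkZ : (k:ℤ) < d := by exact_mod_cast hk
    have hk'Z : (k':ℤ) < d := by exact_mod_cast hk'
    have hk0 : (0:ℤ) ≤ k := Int.natCast_nonneg k
    have hk'0 : (0:ℤ) ≤ k' := Int.natCast_nonneg k'
    have hdZ : (0:ℤ) < d := by exact_mod_cast hdRpos
    have hn0 : n = 0 := by
      rcases lt_trichotomy n 0 with h | h | h
      · have h1 : n ≤ -1 := by omega
        nlinarith
      · exact h
      · have h1 : 1 ≤ n := by omega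
        nlinarith
    rw [hn0] at hintEq
    simp at hintEq
    exact_mod_cast hintEq
  -- range of landing points equals P
  have hLfin : Function.Injective (fun k : Fin d => L k) := by
    intro a b hab
    exact Fin.ext (hinj a b a.2 b.2 hab)
  have hrange : Set.range (fun k : Fin d => L k) = P := by
    apply Set.eq_of_subset_of_ncard_le
    · rintro x ⟨k, rfl⟩
      exact hLP k
    · have h1 : Set.range (fun k : Fin d => L k) =
          ↑(Finset.image (fun k : Fin d => L k) Finset.univ) := by
        ext x
        simp
      rw [h1, Set.ncard_coe_finset, Finset.card_image_of_injective _ hLfin,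
        Finset.card_univ, Fintype.card_fin, hPcard]
    · exact hPfin
  refine ⟨hPcard, fun w hw => ?_⟩
  have hwP : w ∈ P := hw
  obtain ⟨k, hk⟩ : ∃ k : Fin d, L k = w := by
    rw [← hrange] at hwP
    exact hwP
  refine ⟨k, ?_, ?_⟩
  · show Tendsto (fun r : ℝ =>
      φ ((r:ℂ) * Complex.exp (2 * Real.pi * Complex.I * (((t + (k:ℕ))/d : ℝ):ℂ)))) F (nhds w)
    rw [← hk]
    exact hLt (k:ℕ)
  · intro k' hk'
    have hk'land : Tendsto (fun r : ℝ =>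
        φ ((r:ℂ) * Complex.exp (2 * Real.pi * Complex.I * (((t + (k':ℕ))/d : ℝ):ℂ)))) F (nhds w) :=
      hk'
    have huniq : L (k':ℕ) = w := tendsto_nhds_unique (hLt (k':ℕ)) hk'land
    have : L (k':ℕ) = L (k:ℕ) := by rw [huniq, hk]
    exact Fin.ext (hinj k' k k'.2 k.2 this)
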